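/- arXiv:2402.19223 — 3 statements merged into one kernel-verified Lean document; each statement's English description precedes it below -/
import Mathlib

section
/- For every k ≥ 6, F_{k-2} occurs in F_k exactly three times, namely at positions 1, f_{k-2}+1, and f_{k-1}+1 (the last being a suffix occurrence). -/
/-- Strings over the binary alphabet `{a, b}`: `false` is `a`, `true` is `b`. -/
abbrev Word := List Bool

/-- `w` is primitive if it is not of the form `x^j` for any `j ≥ 2`. -/
def Primitive (w : Word) : Prop := ¬ ∃ (x : Word) (j : ℕ), 2 ≤ j ∧ w = (List.replicate j x).flatten

/-- `u` occurs in `w` at (0-indexed) position `i`. -/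
def occursAt (u w : Word) (i : ℕ) : Prop :=
  i + u.length ≤ w.length ∧ (w.drop i).take u.length = u

instance (u w : Word) (i : ℕ) : Decidable (occursAt u w i) := by
  unfold occursAt; infer_instance

/-- Fibonacci words: `F 1 = b`, `F 2 = a`, `F (k+1) = F k ++ F (k-1)`. -/
def F : ℕ → Word
  | 0 => []
  | 1 => [true]
  | 2 => [false]
  | (n+3) => F (n+2) ++ F (n+1)

/-- Fibonacci numbers with `f 1 = f 2 = 1`. -/
def f : ℕ → ℕ
  | 0 => 0
  | 1 => 1
  | (n+2) => f (n+1) + f n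

/-- The morphism `φ(a) = aab`, `φ(b) = ab`. -/
def phi (w : Word) : Word := w.flatMap fun c => if c then [false, true] else [false, false, true]

/-- Lexicographic order on words induced by `a < b` (a proper prefix is smaller). -/
def wlt (x y : Word) : Prop := List.Lex (· < ·) x y

/-- `u` is a border of `w`: a proper substring that is both a prefix and a suffix. -/
def IsBorder (u w : Word) : Prop := u ≠ w ∧ u <+: w ∧ u <:+ w

/-- `w` is a Lyndon word: it is smaller than all of its proper nonempty suffixes. -/
def IsLyndon (w : Word) : Prop := ∀ s : Word, s <:+ w → s ≠ [] → s ≠ w → wlt w s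

/-- `fs` is the Lyndon factorization of `w`: a factorization into nonempty Lyndon
words that is lexicographically non-increasing (powers written as repetitions). -/
def IsLyndonFactorization (w : Word) (fs : List Word) : Prop :=
  fs.flatten = w ∧ (∀ x ∈ fs, IsLyndon x ∧ x ≠ []) ∧ List.Chain' (fun x y => ¬ wlt x y) fs

/-- `ℓ 1 = ab`, `ℓ (k+1) = φ (ℓ k)`. -/
def ell : ℕ → Word
  | 0 => []
  | 1 => [false, true]
  | (n+2) => phi (ell (n+1))

lemma lenF : ∀ n, (F n).length = f n
  | 0 => rfl
  | 1 => rfl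
  | 2 => rfl
  | (n+3) => by
      show (F (n+2) ++ F (n+1)).length = f (n+2) + f (n+1)
      rw [List.length_append, lenF (n+2), lenF (n+1)]

lemma flatten_repl_add (t : Word) (m n : ℕ) :
    (List.replicate (m+n) t).flatten = (List.replicate m t).flatten ++ (List.replicate n t).flatten := by
  rw [List.replicate_add, List.flatten_append]

lemma comm_power : ∀ N (a b : Word), a.length + b.length ≤ N → a ++ b = b ++ a →
    ∃ (t : Word) (m n : ℕ), a = (List.replicate m t).flatten ∧ b = (List.replicate n t).flatten := by
  intro N
  induction N with
  | zero =>
      intro a b hl _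
      have : a = [] ∧ b = [] := by
        constructor <;> (apply List.eq_nil_of_length_eq_zero; omega)
      exact ⟨[], 0, 0, by simp [this.1], by simp [this.2]⟩
  | succ N ih =>
      intro a b hl h
      rcases eq_or_ne a [] with rfl | ha
      · exact ⟨b, 0, 1, by simp, by simp⟩
      rcases eq_or_ne b [] with rfl | hb
      · exact ⟨a, 1, 0, by simp, by simp⟩
      rcases le_total a.length b.length with hab | hab
      · -- a is a prefix of b
        have hbtake : b.take a.length = a := by
          have : (b ++ a).take a.length = b.take a.length := by
            rw [List.take_append]
            simp [Nat.sub_eq_zero_of_le hab]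
          rw [← h] at this
          simpa using this.symm
        set c := b.drop a.length with hc
        have hbc : b = a ++ c := by rw [← hbtake, hc]; simp
        have hcl : c.length = b.length - a.length := by simp [hc]
        have h2 : a ++ c = c ++ a := by
          have := h
          rw [hbc, List.append_assoc] at this
          exact List.append_cancel_left this
        have ha0 : 0 < a.length := List.length_pos_iff.mpr ha
        obtain ⟨t, m, n, h1, h2'⟩ := ih a c (by omega) h2
        exact ⟨t, m, m + n, h1, by rw [hbc, flatten_repl_add, h1, h2']⟩
      · -- b is a prefix of a
        obtain ⟨t, m, n, h1, h2'⟩ : ∃ (t : Word) (m n : ℕ),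
            b = (List.replicate m t).flatten ∧ a = (List.replicate n t).flatten := by
          -- symmetric argument
          have hbtake : a.take b.length = b := by
            have : (a ++ b).take b.length = a.take b.length := by
              rw [List.take_append]
              simp [Nat.sub_eq_zero_of_le hab]
            rw [h] at this
            simpa using this.symm
          set c := a.drop b.length with hc
          have hbc : a = b ++ c := by rw [← hbtake, hc]; simp
          have hcl : c.length = a.length - b.length := by simp [hc]
          have h2 : b ++ c = c ++ b := by
            have := h.symm
            rw [hbc, List.append_assoc] at this
            exact List.append_cancel_left this
          have hb0 : 0 < b.length := List.length_pos_iff.mpr hb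
          obtain ⟨t, m, n, h1, h2'⟩ := ih b c (by omega) h2
          exact ⟨t, m, m + n, h1, by rw [hbc, flatten_repl_add, h1, h2']⟩
        exact ⟨t, n, m, h2', h1⟩

lemma occ_xx (x : Word) (hp : Primitive x) (i : ℕ) (h : occursAt x (x ++ x) i) :
    i = 0 ∨ i = x.length := by
  obtain ⟨hlen, htk⟩ := h
  rw [List.length_append] at hlen
  by_contra hcon
  push_neg at hcon
  have hi1 : 0 < i := Nat.pos_of_ne_zero hcon.1
  have hi2 : i < x.length := by
    rcases lt_or_eq_of_le (by omega : i ≤ x.length) with h' | h'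
    · exact h'
    · exact absurd h' hcon.2
  -- compute the occurrence
  have hdrop : (x ++ x).drop i = x.drop i ++ x := by
    rw [List.drop_append, Nat.sub_eq_zero_of_le (le_of_lt hi2)]
    rfl
  have hba : x.drop i ++ x.take i = x := by
    rw [hdrop, List.take_append,
      List.take_of_length_le (by rw [List.length_drop]; omega),
      List.length_drop, show x.length - (x.length - i) = i by omega] at htk
    exact htk
  have hab : x.take i ++ x.drop i = x := List.take_append_drop i x
  have hcomm : x.take i ++ x.drop i = x.drop i ++ x.take i := by rw [hab, hba]
  obtain ⟨t, m, n, h1, h2⟩ := comm_power (x.length + x.length) (x.take i) (x.drop i)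
    (by simp; omega) hcomm
  have hm : m ≠ 0 := by
    rintro rfl
    simp at h1
    rcases h1 with h | rfl
    · omega
    · simp at hi2
  have hn : n ≠ 0 := by
    rintro rfl
    simp at h2
    omega
  exact hp ⟨t, m + n, by omega, by rw [← hab, h1, h2, flatten_repl_add]⟩

lemma countF_false : ∀ n, (F (n+1)).count false = f n
  | 0 => rfl
  | 1 => rfl
  | (n+2) => by
      show (F (n+2) ++ F (n+1)).count false = f (n+1) + f n
      rw [List.count_append, countF_false (n+1), countF_false n]

lemma countF_true : ∀ n, (F (n+2)).count true = f n
  | 0 => rfl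
  | 1 => rfl
  | (n+2) => by
      show (F (n+3) ++ F (n+2)).count true = f (n+1) + f n
      rw [List.count_append, countF_true (n+1), countF_true n]

lemma fib_cop : ∀ n, Nat.gcd (f n) (f (n+1)) = 1
  | 0 => rfl
  | (n+1) => by
      show Nat.gcd (f (n+1)) (f (n+1) + f n) = 1
      rw [Nat.add_comm (f (n+1)) (f n), Nat.gcd_add_self_right, Nat.gcd_comm]
      exact fib_cop n

lemma count_repl (t : Word) (c : Bool) : ∀ j, ((List.replicate j t).flatten).count c = j * t.count c
  | 0 => by simp
  | (j+1) => by
      rw [List.replicate_succ, List.flatten_cons, List.count_append, count_repl t c j]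
      ring

lemma primF (n : ℕ) : Primitive (F (n+2)) := by
  rintro ⟨t, j, hj, he⟩
  have h1 : f (n+1) = j * t.count false := by
    rw [← countF_false (n+1), he, count_repl]
  have h2 : f n = j * t.count true := by
    rw [← countF_true n, he, count_repl]
  have d1 : j ∣ f (n+1) := Dvd.intro _ h1.symm
  have d2 : j ∣ f n := Dvd.intro _ h2.symm
  have := Nat.dvd_gcd d2 d1
  rw [fib_cop n] at this
  have := Nat.le_of_dvd one_pos this
  omega

/- occurrence lemmas -/

lemma occ_append_right (u w v : Word) (j : ℕ) :
    occursAt u (w ++ v) (w.length + j) ↔ occursAt u v j := by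
  unfold occursAt
  rw [List.drop_length_add_append j, List.length_append]
  constructor
  · rintro ⟨h1, h2⟩; exact ⟨by omega, h2⟩
  · rintro ⟨h1, h2⟩; exact ⟨by omega, h2⟩

lemma occ_append_left (u w v : Word) (i : ℕ) (h : i + u.length ≤ w.length) :
    occursAt u (w ++ v) i ↔ occursAt u w i := by
  unfold occursAt
  have hd : (w ++ v).drop i = w.drop i ++ v.drop (i - w.length) := List.drop_append
  have ht : (w.drop i ++ v.drop (i - w.length)).take u.length
      = (w.drop i).take u.length ++ (v.drop (i - w.length)).take (u.length - (w.drop i).length) := List.take_append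
  have hlen : u.length - (w.drop i).length = 0 := by
    rw [List.length_drop]; omega
  rw [hd, ht, hlen, List.take_zero, List.append_nil, List.length_append]
  constructor
  · rintro ⟨h1, h2⟩; exact ⟨h, h2⟩
  · rintro ⟨h1, h2⟩; exact ⟨by omega, h2⟩

lemma occ_prefix (u p w : Word) (i : ℕ) (h : occursAt u w i) (hp : p <+: u) :
    occursAt p w i := by
  obtain ⟨h1, h2⟩ := h
  have hl : p.length ≤ u.length := hp.length_le
  refine ⟨by omega, ?_⟩
  conv_lhs => rw [show p.length = min p.length u.length from (min_eq_left hl).symm]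
  rw [← List.take_take, h2]
  exact (List.prefix_iff_eq_take.mp hp).symm

lemma occ_zero (x r : Word) : occursAt x (x ++ r) 0 := by
  refine ⟨by simp, ?_⟩
  simp [List.take_append]

/- decompositions -/

lemma decomp1 (m : ℕ) : F (m+6) = F (m+5) ++ F (m+4) := rfl

lemma decomp2 (m : ℕ) : F (m+6) = (F (m+4) ++ F (m+4)) ++ (F (m+1) ++ F (m+2)) := by
  show F (m+5) ++ F (m+4) = _
  show (F (m+4) ++ F (m+3)) ++ F (m+4) = _
  rw [show F (m+4) = F (m+3) ++ F (m+2) from rfl, show F (m+3) = F (m+2) ++ F (m+1) from rfl]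
  simp [List.append_assoc]

lemma decomp3 (m : ℕ) : F (m+6) = F (m+4) ++ ((F (m+3) ++ F (m+3)) ++ F (m+2)) := by
  show (F (m+4) ++ F (m+3)) ++ F (m+4) = _
  rw [show F (m+4) = F (m+3) ++ F (m+2) from rfl]
  simp [List.append_assoc]

/-- For `k ≥ 6`, `F (k-2)` occurs in `F k` exactly at (1-indexed) positions
`1`, `f (k-2) + 1` and `f (k-1) + 1` (0-indexed: `0`, `f (k-2)`, `f (k-1)`),
the last being a suffix occurrence. -/
theorem stmt2 (k : ℕ) (hk : 6 ≤ k) :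
    (∀ i : ℕ, occursAt (F (k - 2)) (F k) i ↔ i = 0 ∨ i = f (k - 2) ∨ i = f (k - 1)) ∧
      f (k - 1) + f (k - 2) = f k := by
  obtain ⟨m, rfl⟩ : ∃ m, k = m + 6 := ⟨k - 6, by omega⟩
  have e2 : m + 6 - 2 = m + 4 := by omega
  have e1 : m + 6 - 1 = m + 5 := by omega
  rw [e1, e2]
  refine ⟨?_, rfl⟩
  intro i
  constructor
  · intro h
    have hlen : i + f (m+4) ≤ f (m+6) := by
      have := h.1; rwa [lenF, lenF] at this
    have hfib : f (m+6) = f (m+5) + f (m+4) := rfl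
    have hfib5 : f (m+5) = f (m+4) + f (m+3) := rfl
    by_cases hi : i ≤ f (m+4)
    · -- inside the xx prefix
      have hxx : occursAt (F (m+4)) (F (m+4) ++ F (m+4)) i := by
        rw [decomp2] at h
        rw [← occ_append_left _ _ (F (m+1) ++ F (m+2)) i
          (by simp only [List.length_append, lenF]; omega)]
        exact h
      rcases occ_xx (F (m+4)) (primF (m+2)) i hxx with h0 | h0
      · exact Or.inl h0
      · exact Or.inr (Or.inl (by rw [h0, lenF]))
    · push_neg at hi
      set j := i - f (m+4) with hj
      have hij : i = f (m+4) + j := by omega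
      have hj0 : 0 < j := by omega
      have hj3 : j ≤ f (m+3) := by omega
      -- occurrence of F (m+3) in (F(m+3) ++ F(m+3)) at j
      have h3 : occursAt (F (m+3)) ((F (m+3) ++ F (m+3)) ++ F (m+2)) j := by
        have := occ_prefix _ (F (m+3)) _ i h
          (by rw [show F (m+4) = F (m+3) ++ F (m+2) from rfl]; exact List.prefix_append _ _)
        rw [decomp3] at this
        rw [hij, ← lenF (m+4)] at this
        exact (occ_append_right _ _ _ j).mp this
      have hxx : occursAt (F (m+3)) (F (m+3) ++ F (m+3)) j := by
        rw [← occ_append_left _ _ (F (m+2)) j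
          (by simp only [List.length_append, lenF]; omega)]
        exact h3
      rcases occ_xx (F (m+3)) (primF (m+1)) j hxx with h0 | h0
      · omega
      · rw [lenF] at h0
        right; right; omega
  · rintro (rfl | rfl | rfl)
    · rw [decomp2, List.append_assoc]
      exact occ_zero _ _
    · rw [decomp2, List.append_assoc, ← lenF (m+4),
        show (F (m+4)).length = (F (m+4)).length + 0 from rfl]
      exact (occ_append_right _ _ _ 0).mpr (occ_zero _ _)
    · rw [decomp1, ← lenF (m+5), show (F (m+5)).length = (F (m+5)).length + 0 from rfl]
      refine (occ_append_right _ _ _ 0).mpr ⟨by simp, by simp⟩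
end

section
/- For every k ≥ 8, F_{k-4} occurs exactly eight times as a substring of F_k. -/
/-! ### Occurrence counting -/

def cnt (u : Word) : Word → ℕ
  | [] => if u = [] then 1 else 0
  | c :: w => (if u <+: c :: w then 1 else 0) + cnt u w

lemma occursAt_zero (u w : Word) : occursAt u w 0 ↔ u <+: w := by
  constructor
  · rintro ⟨h1, h2⟩
    rw [List.prefix_iff_eq_take]; simpa using h2.symm
  · intro h
    refine ⟨by simpa using h.length_le, ?_⟩
    rw [List.prefix_iff_eq_take] at h; simpa using h.symm

lemma occursAt_succ (u w : Word) (c : Bool) (i : ℕ) :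
    occursAt u (c :: w) (i+1) ↔ occursAt u w i := by
  unfold occursAt
  simp [List.drop_succ_cons]
  omega

lemma card_cnt (u w : Word) :
    ((Finset.range (w.length + 1)).filter (fun i => occursAt u w i)).card = cnt u w := by
  induction w with
  | nil =>
      rw [show ([]:Word).length + 1 = 1 from rfl, Finset.range_one, Finset.filter_singleton]
      by_cases h : u = [] <;>
        simp [cnt, h, occursAt_zero, List.prefix_nil]
  | cons c w ih =>
      rw [Finset.card_filter, List.length_cons, Finset.sum_range_succ']
      simp only [occursAt_succ, occursAt_zero]
      rw [← Finset.card_filter, ih]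
      simp [cnt]
      omega

/-! ### Splitting counts by the next letter -/

lemma prefix_step {u w : Word} (h : u <+: w) (hne : u ≠ w) :
    (u ++ [false] <+: w) ∨ (u ++ [true] <+: w) := by
  obtain ⟨r, rfl⟩ := h
  cases r with
  | nil => simp at hne
  | cons d r' =>
      cases d
      · left; exact ⟨r', by simp⟩
      · right; exact ⟨r', by simp⟩

lemma not_both {u w : Word} (h1 : u ++ [false] <+: w) (h2 : u ++ [true] <+: w) : False := by
  have := List.prefix_of_prefix_length_le h1 h2 (by simp)
  have := this.eq_of_length (by simp)
  simpa using List.append_inj_right this rfl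

lemma cnt_zero_of_long {u w : Word} (h : w.length < u.length) : cnt u w = 0 := by
  induction w with
  | nil =>
      have : u ≠ [] := by intro e; rw [e] at h; simp at h
      simp [cnt, this]
  | cons c w ih =>
      show (if u <+: c :: w then 1 else 0) + cnt u w = 0
      have h1 : ¬ u <+: c :: w := by
        intro hp; have := hp.length_le; simp at this h; omega
      have h2 : cnt u w = 0 := ih (by simp at h; omega)
      simp [h1, h2]

lemma cnt_split (u : Word) (w : Word) :
    cnt u w = cnt (u ++ [false]) w + cnt (u ++ [true]) w + (if u <:+ w then 1 else 0) := by
  induction w with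
  | nil =>
      by_cases h : u = [] <;> simp [cnt, h]
  | cons c w ih =>
      have hsuf : (u <:+ c :: w) ↔ (u = c :: w ∨ u <:+ w) := List.suffix_cons_iff
      show _ + cnt u w = (_ + cnt (u ++ [false]) w) + (_ + cnt (u ++ [true]) w) + _
      rw [ih]
      by_cases h1 : u = c :: w
      · have hp : u <+: c :: w := h1 ▸ List.prefix_refl _
        have hns : ¬ u <:+ w := by
          intro hs; have := hs.length_le; rw [h1] at this; simp at this
        have hnf : ¬ (u ++ [false] <+: c :: w) := by
          intro hf; have := hf.length_le; rw [h1] at this; simp at this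
        have hnt : ¬ (u ++ [true] <+: c :: w) := by
          intro hf; have := hf.length_le; rw [h1] at this; simp at this
        have c1 : cnt (u ++ [false]) w = 0 := cnt_zero_of_long (by rw [h1]; simp)
        have c2 : cnt (u ++ [true]) w = 0 := cnt_zero_of_long (by rw [h1]; simp)
        have c3 : (u <:+ c :: w) := h1 ▸ List.suffix_refl _
        simp [hp, hns, hnf, hnt, c1, c2, c3]
      · have hsuf' : (u <:+ c :: w) ↔ (u <:+ w) := by rw [hsuf]; simp [h1]
        by_cases h2 : u <+: c :: w
        · rcases prefix_step h2 h1 with hf | ht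
          · have hnt : ¬ (u ++ [true] <+: c :: w) := fun ht => not_both hf ht
            simp [h2, hf, hnt, hsuf']
            omega
          · have hnf : ¬ (u ++ [false] <+: c :: w) := fun hf => not_both hf ht
            simp [h2, ht, hnf, hsuf']
            omega
        · have hnf : ¬ (u ++ [false] <+: c :: w) := by
            intro hf; exact h2 ((List.prefix_append u [false]).trans hf)
          have hnt : ¬ (u ++ [true] <+: c :: w) := by
            intro hf; exact h2 ((List.prefix_append u [true]).trans hf)
          simp [h2, hnf, hnt, hsuf']

lemma cnt_eq_zero_iff (u w : Word) : cnt u w = 0 ↔ ¬ u <:+: w := by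
  induction w with
  | nil =>
      by_cases h : u = [] <;> simp [cnt, h, List.infix_nil]
  | cons c w ih =>
      show (if u <+: c :: w then 1 else 0) + cnt u w = 0 ↔ _
      rw [List.infix_cons_iff]
      by_cases h : u <+: c :: w <;> simp [h, ih]

lemma cnt_zero_of_infix {p v w : Word} (hpv : p <:+: v) (hp : cnt p w = 0) : cnt v w = 0 := by
  rw [cnt_eq_zero_iff] at *
  exact fun hv => hp (hpv.trans hv)

/-! ### The Fibonacci morphism a ↦ ab, b ↦ a -/

def sig (w : Word) : Word := w.flatMap fun c => if c then [false] else [false, true]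

lemma sig_nil : sig [] = [] := rfl

lemma sig_cons_false (w : Word) : sig (false :: w) = false :: true :: sig w := rfl

lemma sig_cons_true (w : Word) : sig (true :: w) = false :: sig w := rfl

lemma sig_append (x y : Word) : sig (x ++ y) = sig x ++ sig y :=
  List.flatMap_append

lemma sig_head : ∀ w : Word, w ≠ [] → ∃ r, sig w = false :: r
  | [], h => absurd rfl h
  | false :: w, _ => ⟨true :: sig w, rfl⟩
  | true :: w, _ => ⟨sig w, rfl⟩

lemma sig_ne_nil {w : Word} (h : w ≠ []) : sig w ≠ [] := by
  obtain ⟨r, hr⟩ := sig_head w h; simp [hr]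

lemma sig_mono {u w : Word} (h : u <+: w) : sig u <+: sig w := by
  obtain ⟨r, rfl⟩ := h
  rw [sig_append]; exact List.prefix_append _ _

lemma getLast?_cons_ne {c : Bool} {u : Word} (h : u ≠ []) :
    (c :: u).getLast? = u.getLast? := by
  cases u with
  | nil => exact absurd rfl h
  | cons d t => exact List.getLast?_cons_cons

lemma sig_prefix_rev : ∀ u w : Word, u.getLast? = some false → sig u <+: sig w → u <+: w := by
  intro u
  induction u with
  | nil => intro w h; simp at h
  | cons c u' ih =>
      intro w hlast hpre
      cases w with
      | nil =>
          rw [sig_nil, List.prefix_nil] at hpre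
          exact absurd hpre (sig_ne_nil (by simp))
      | cons d t =>
          cases c <;> cases d
          · -- c = false, d = false
            rw [sig_cons_false, sig_cons_false, List.cons_prefix_cons,
              List.cons_prefix_cons] at hpre
            have h2 : sig u' <+: sig t := hpre.2.2
            cases Decidable.em (u' = []) with
            | inl he => subst he; exact List.cons_prefix_cons.2 ⟨rfl, List.nil_prefix⟩
            | inr he =>
                have : u'.getLast? = some false := by
                  rwa [getLast?_cons_ne he] at hlast
                exact List.cons_prefix_cons.2 ⟨rfl, ih t this h2⟩
          · -- c = false, d = true
            rw [sig_cons_false, sig_cons_true, List.cons_prefix_cons] at hpre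
            exfalso
            cases Decidable.em (t = []) with
            | inl he => subst he; rw [sig_nil, List.prefix_nil] at hpre; simp at hpre
            | inr he =>
                obtain ⟨r, hr⟩ := sig_head t he
                rw [hr, List.cons_prefix_cons] at hpre
                simp at hpre
          · -- c = true, d = false
            rw [sig_cons_true, sig_cons_false, List.cons_prefix_cons] at hpre
            exfalso
            have hu' : u' ≠ [] := by
              intro he; subst he; simp at hlast
            obtain ⟨r, hr⟩ := sig_head u' hu'
            rw [hr, List.cons_prefix_cons] at hpre
            simp at hpre
          · -- c = true, d = true
            rw [sig_cons_true, sig_cons_true, List.cons_prefix_cons] at hpre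
            have hu' : u' ≠ [] := by
              intro he; subst he; simp at hlast
            have : u'.getLast? = some false := by rwa [getLast?_cons_ne hu'] at hlast
            exact List.cons_prefix_cons.2 ⟨rfl, ih t this hpre.2⟩

lemma sig_prefix {u w : Word} (h : u.getLast? = some false) :
    sig u <+: sig w ↔ u <+: w :=
  ⟨sig_prefix_rev u w h, sig_mono⟩

lemma cnt_sig (u : Word) (hlast : u.getLast? = some false) :
    ∀ w : Word, cnt (sig u) (sig w) = cnt u w := by
  have hu : u ≠ [] := by intro h; rw [h] at hlast; simp at hlast
  intro w
  induction w with
  | nil =>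
      rw [sig_nil]
      simp [cnt, sig_ne_nil hu, hu]
  | cons c w ih =>
      cases c
      · rw [sig_cons_false]
        show (if sig u <+: _ then 1 else 0) + ((if sig u <+: _ then 1 else 0) + cnt (sig u) (sig w))
            = (if u <+: false :: w then 1 else 0) + cnt u w
        have h2 : ¬ (sig u <+: true :: sig w) := by
          obtain ⟨r, hr⟩ := sig_head u hu
          rw [hr]; intro hp; rw [List.cons_prefix_cons] at hp; simp at hp
        rw [show (false :: true :: sig w) = sig (false :: w) from rfl]
        simp only [sig_prefix hlast]
        rw [ih]
        simp [h2]
      · rw [sig_cons_true]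
        show (if sig u <+: _ then 1 else 0) + cnt (sig u) (sig w)
            = (if u <+: true :: w then 1 else 0) + cnt u w
        rw [show (false :: sig w) = sig (true :: w) from rfl]
        simp only [sig_prefix hlast]
        rw [ih]

/-! ### Fibonacci word structure -/

lemma suffix_eq_of_length {u v w : Word} (h1 : u <:+ w) (h2 : v <:+ w)
    (h : u.length = v.length) : u = v := by
  rw [← List.reverse_prefix] at h1 h2
  have := (List.prefix_of_prefix_length_le h1 h2 (by simp [h])).eq_of_length (by simp [h])
  simpa using this

lemma sigF : ∀ n, sig (F (n+2)) = F (n+3)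
  | 0 => rfl
  | 1 => rfl
  | (n+2) => by
      show sig (F (n+3) ++ F (n+2)) = F (n+4) ++ F (n+3)
      rw [sig_append, sigF (n+1), sigF n]

lemma lastTwo : ∀ j, (∃ s, F (2*j+3) = s ++ [false, true]) ∧
    (∃ s, F (2*j+4) = s ++ [true, false])
  | 0 => ⟨⟨[], rfl⟩, ⟨[false], rfl⟩⟩
  | (j+1) => by
      obtain ⟨⟨s1, h1⟩, ⟨s2, h2⟩⟩ := lastTwo j
      constructor
      · exact ⟨F (2*j+4) ++ s1, by
          show F (2*j+4) ++ F (2*j+3) = _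
          rw [h1, List.append_assoc]⟩
      · exact ⟨F (2*(j+1)+3) ++ s2, by
          show F (2*j+4+1) ++ F (2*j+4) = _
          rw [h2, ← List.append_assoc]
          rfl⟩

lemma lastTwo' : ∀ m, 3 ≤ m → ∃ s x, F m = s ++ [x, !x] := by
  intro m hm
  rcases Nat.even_or_odd m with ⟨j, hj⟩ | ⟨j, hj⟩
  · have hj' : j ≥ 2 := by omega
    obtain ⟨s, hs⟩ := (lastTwo (j-2)).2
    have : 2*(j-2)+4 = m := by omega
    rw [this] at hs
    exact ⟨s, true, by simpa using hs⟩
  · have hj' : j ≥ 1 := by omega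
    obtain ⟨s, hs⟩ := (lastTwo (j-1)).1
    have : 2*(j-1)+3 = m := by omega
    rw [this] at hs
    exact ⟨s, false, by simpa using hs⟩

lemma trueMem : ∀ n, true ∈ F (n+3)
  | 0 => by simp [show F 3 = [false, true] from rfl]
  | (n+1) => by
      show true ∈ F (n+3) ++ F (n+2)
      exact List.mem_append_left _ (trueMem n)

lemma F_ne_nil (n : ℕ) : F (n+3) ≠ [] := by
  intro h; have := trueMem n; rw [h] at this; simp at this

/-! ### Forbidden factors bb and aaa -/

lemma no_bb_sig : ∀ w : Word, ¬ [true, true] <:+: sig w := by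
  intro w
  induction w with
  | nil => rw [sig_nil, List.infix_nil]; simp
  | cons c w ih =>
      cases c
      · rw [sig_cons_false]
        rw [List.infix_cons_iff]
        rintro (h | h)
        · rw [List.cons_prefix_cons] at h; simp at h
        · rw [List.infix_cons_iff] at h
          rcases h with h | h
          · rw [List.cons_prefix_cons] at h
            obtain ⟨-, h⟩ := h
            cases Decidable.em (w = []) with
            | inl he => subst he; rw [sig_nil, List.prefix_nil] at h; simp at h
            | inr he =>
                obtain ⟨r, hr⟩ := sig_head w he
                rw [hr, List.cons_prefix_cons] at h; simp at h
          · exact ih h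
      · rw [sig_cons_true, List.infix_cons_iff]
        rintro (h | h)
        · rw [List.cons_prefix_cons] at h; simp at h
        · exact ih h

lemma no_aaa_sig : ∀ w : Word, ¬ [true, true] <:+: w →
    ¬ [false, false, false] <:+: sig w := by
  intro w
  induction w with
  | nil => intro _; rw [sig_nil, List.infix_nil]; simp
  | cons c w ih =>
      intro hbb
      have hbbw : ¬ [true, true] <:+: w := fun h => hbb (List.infix_cons h)
      cases c
      · rw [sig_cons_false, List.infix_cons_iff]
        rintro (h | h)
        · rw [List.cons_prefix_cons, List.cons_prefix_cons] at h; simp at h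
        · rw [List.infix_cons_iff] at h
          rcases h with h | h
          · rw [List.cons_prefix_cons] at h; simp at h
          · exact ih hbbw h
      · rw [sig_cons_true, List.infix_cons_iff]
        rintro (h | h)
        · rw [List.cons_prefix_cons] at h
          obtain ⟨-, h⟩ := h
          cases w with
          | nil => rw [sig_nil, List.prefix_nil] at h; simp at h
          | cons d t =>
              cases d
              · rw [sig_cons_false, List.cons_prefix_cons, List.cons_prefix_cons] at h
                simp at h
              · exact hbb (List.IsPrefix.isInfix
                  (List.cons_prefix_cons.2 ⟨rfl, List.cons_prefix_cons.2 ⟨rfl, List.nil_prefix⟩⟩))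
        · exact ih hbbw h

lemma no_bb_F : ∀ n, ¬ [true, true] <:+: F n := by
  intro n
  match n with
  | 0 => rw [show F 0 = [] from rfl, List.infix_nil]; simp
  | 1 =>
      intro h
      have := h.length_le; simp [show F 1 = [true] from rfl] at this
  | 2 =>
      intro h
      have := h.length_le; simp [show F 2 = [false] from rfl] at this
  | (n+3) =>
      rw [← sigF n]
      exact no_bb_sig _

lemma no_aaa_F : ∀ n, ¬ [false, false, false] <:+: F n := by
  intro n
  match n with
  | 0 => rw [show F 0 = [] from rfl, List.infix_nil]; simp
  | 1 =>
      intro h; have := h.length_le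
      simp [show F 1 = [true] from rfl] at this
  | 2 =>
      intro h; have := h.length_le
      simp [show F 2 = [false] from rfl] at this
  | (n+3) =>
      rw [← sigF n]
      exact no_aaa_sig _ (no_bb_F (n+2))

/-! ### `F m ++ [b]` is never a factor -/

lemma Fb_not_infix : ∀ m k, 5 ≤ m → ¬ (F m ++ [true]) <:+: F k := by
  intro m k hm
  rcases Nat.even_or_odd m with ⟨j, hj⟩ | ⟨j, hj⟩
  · -- m even, m = 2j'+6
    have hj' : m = 2*(j-3)+6 := by omega
    set j' := j - 3 with hj'def
    obtain ⟨s, hs⟩ := (lastTwo j').2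
    have key : F m ++ [true] = sig (sig s ++ [false, false, false]) := by
      rw [hj', ← sigF (2*j'+3), ← sigF (2*j'+2), hs, sig_append]
      rw [show sig [true, false] = [false, false, true] from rfl, sig_append, sig_append]
      simp [sig]
    intro h
    rw [key] at h
    match k with
    | 0 =>
        have := h.length_le
        rw [sig_append, show F 0 = [] from rfl] at this; simp [sig] at this
    | 1 =>
        have := h.length_le
        rw [sig_append, show F 1 = [true] from rfl] at this; simp [sig] at this
    | 2 =>
        have := h.length_le
        rw [sig_append, show F 2 = [false] from rfl] at this; simp [sig] at this
    | (i+3) =>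
        have glast : (sig s ++ [false, false, false]).getLast? = some false := by
          rw [show sig s ++ [false, false, false]
              = (sig s ++ [false, false]) ++ [false] by simp]
          exact List.getLast?_concat
        have hzero : cnt (sig s ++ [false, false, false]) (F (i+2)) = 0 := by
          rw [cnt_eq_zero_iff]
          intro habs
          exact no_aaa_F (i+2) ((List.suffix_append (sig s) _).isInfix.trans habs)
        have : cnt (sig (sig s ++ [false, false, false])) (F (i+3)) = 0 := by
          rw [← sigF i, cnt_sig _ glast]
          exact hzero
        rw [cnt_eq_zero_iff] at this
        exact this h
  · -- m odd, m = 2j'+5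
    have hj' : m = 2*(j-2)+5 := by omega
    obtain ⟨s, hs⟩ := (lastTwo (j-2+1)).1
    have hs' : F m = s ++ [false, true] := by
      rw [hj']; rw [show 2*(j-2)+5 = 2*(j-2+1)+3 by ring] ; exact hs
    intro h
    have hbb : [true, true] <:+: F m ++ [true] := by
      rw [hs']
      refine List.IsSuffix.isInfix ⟨s ++ [false], by simp⟩
    exact no_bb_F k (hbb.trans h)

/-! ### `F (n+6) ++ [a]` is not a suffix of `F (n+10)` -/

lemma rep_of_concat_eq_cons : ∀ (x : Word) (c d : Bool), x ++ [c] = d :: x →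
    x = List.replicate x.length d ∧ c = d := by
  intro x
  induction x with
  | nil => intro c d h; simp at h; simp [h]
  | cons e x' ih =>
      intro c d h
      rw [List.cons_append] at h
      obtain ⟨he, h2⟩ := List.cons_eq_cons.1 h
      obtain ⟨hrep, hcd⟩ := ih c e h2
      subst he
      refine ⟨?_, hcd⟩
      rw [List.length_cons, List.replicate_succ, ← hrep]

lemma notSufFa (n : ℕ) : ¬ (F (n+6) ++ [false]) <:+ F (n+10) := by
  intro h
  obtain ⟨s, c, hs⟩ : ∃ (L : Word) (b : Bool), F (n+7) = L.concat b := by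
    rcases List.eq_nil_or_concat (F (n+7)) with h' | h'
    · exact absurd h' (F_ne_nil (n+4))
    · exact h'
  rw [List.concat_eq_append] at hs
  have hsuf2 : (c :: F (n+6)) <:+ F (n+10) := by
    have h8 : F (n+8) = s ++ (c :: F (n+6)) := by
      show F (n+7) ++ F (n+6) = _
      rw [hs]; simp
    have : (c :: F (n+6)) <:+ F (n+8) := ⟨s, h8.symm⟩
    have h10 : F (n+8) <:+ F (n+10) := ⟨F (n+9), rfl⟩
    exact this.trans h10
  have heq : F (n+6) ++ [false] = c :: F (n+6) :=
    suffix_eq_of_length h hsuf2 (by simp)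
  obtain ⟨hrep, hcd⟩ := rep_of_concat_eq_cons _ _ _ heq
  have hmem : true ∈ F (n+6) := trueMem (n+3)
  rw [hrep] at hmem
  have h1 := List.eq_of_mem_replicate hmem
  rw [← hcd] at h1
  exact absurd h1 (by simp)

/-! ### words ending in `aa` are not suffixes of Fibonacci words -/

lemma aa_not_suffix (m : ℕ) (hm : 3 ≤ m) {x : Word}
    (h : (x ++ [false, false]) <:+ F m) : False := by
  obtain ⟨s, y, hs⟩ := lastTwo' m hm
  have h2 : [false, false] <:+ F m := (List.suffix_append x _).trans h
  have h3 : [y, !y] <:+ F m := ⟨s, hs.symm⟩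
  have := suffix_eq_of_length h2 h3 (by simp)
  cases y <;> simp at this

/-! ### Main counting recursion -/

lemma Hlem : ∀ n, cnt (F (n+5) ++ [false]) (F (n+9)) = 7
  | 0 => by decide
  | (n+1) => by
      have ih := Hlem n
      show cnt (F (n+6) ++ [false]) (F (n+10)) = 7
      rw [cnt_split, if_neg (notSufFa n)]
      have t2 : cnt ((F (n+6) ++ [false]) ++ [true]) (F (n+10)) = 7 := by
        rw [List.append_assoc]
        have e : F (n+6) ++ ([false] ++ [true]) = sig (F (n+5) ++ [false]) := by
          rw [sig_append, sigF (n+3)]; rfl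
        rw [e, show F (n+10) = sig (F (n+9)) from (sigF (n+7)).symm,
          cnt_sig _ List.getLast?_concat]
        exact ih
      have t1 : cnt ((F (n+6) ++ [false]) ++ [false]) (F (n+10)) = 0 := by
        rw [List.append_assoc,
          show ([false] ++ [false] : Word) = [false, false] from rfl, cnt_split]
        have s1 : cnt ((F (n+6) ++ [false, false]) ++ [false]) (F (n+10)) = 0 := by
          rw [cnt_eq_zero_iff]
          intro habs
          apply no_aaa_F (n+10)
          refine (List.IsSuffix.isInfix ?_).trans habs
          rw [List.append_assoc]
          exact List.suffix_append _ _
        have s2 : cnt ((F (n+6) ++ [false, false]) ++ [true]) (F (n+10)) = 0 := by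
          rw [List.append_assoc]
          have e : F (n+6) ++ ([false, false] ++ [true]) = sig (F (n+5) ++ [true, false]) := by
            rw [sig_append, sigF (n+3)]; rfl
          have glast : (F (n+5) ++ [true, false]).getLast? = some false := by
            rw [show F (n+5) ++ [true, false] = (F (n+5) ++ [true]) ++ [false] by simp]
            exact List.getLast?_concat
          rw [e, show F (n+10) = sig (F (n+9)) from (sigF (n+7)).symm,
            cnt_sig _ glast]
          apply cnt_zero_of_infix (p := F (n+5) ++ [true])
          · rw [show F (n+5) ++ [true, false] = (F (n+5) ++ [true]) ++ [false] by simp]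
            exact (List.prefix_append _ _).isInfix
          · exact (cnt_eq_zero_iff _ _).2 (Fb_not_infix (n+5) (n+9) (by omega))
        have s3 : ¬ (F (n+6) ++ [false, false]) <:+ F (n+10) :=
          fun h => aa_not_suffix (n+10) (by omega) h
        rw [s1, s2, if_neg s3]
      rw [t1, t2]


/-- For `k ≥ 8`, `F (k-4)` occurs exactly eight times in `F k`. -/
theorem stmt5 (k : ℕ) (hk : 8 ≤ k) :
    ((Finset.range ((F k).length + 1)).filter (fun i => occursAt (F (k - 4)) (F k) i)).card
      = 8 := by
  rw [card_cnt]
  rcases Nat.lt_or_ge k 9 with h9 | h9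
  · have : k = 8 := by omega
    subst this
    decide
  · obtain ⟨n, rfl⟩ : ∃ n, k = n + 9 := ⟨k - 9, by omega⟩
    rw [show n + 9 - 4 = n + 5 from by omega, cnt_split]
    have hsuf : F (n+5) <:+ F (n+9) := by
      have h1 : F (n+5) <:+ F (n+7) := ⟨F (n+6), rfl⟩
      exact h1.trans ⟨F (n+8), rfl⟩
    rw [Hlem n, (cnt_eq_zero_iff _ _).2 (Fb_not_infix (n+5) (n+9) (by omega)),
      if_pos hsuf]
end

section
/- For every i ≥ 1, the Lyndon factorization of ℓ_i with its last character removed is φ^{i-1}(a), φ^{i-2}(a), …, φ^0(a), where ℓ_1 = ab and ℓ_{k+1} = φ(ℓ_k). -/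
lemma phi_append (x y : Word) : phi (x ++ y) = phi x ++ phi y := by
  simp [phi]

lemma phi_cons (c : Bool) (w : Word) :
    phi (c :: w) = (if c then [false, true] else [false, false, true]) ++ phi w := by
  simp [phi]

lemma lex_append {l x y : Word} (h : List.Lex (· < ·) x y) :
    List.Lex (· < ·) (l ++ x) (l ++ y) := by
  induction l with
  | nil => exact h
  | cons a l ih => exact List.Lex.cons ih

lemma not_lex_append (l x : Word) : ¬ List.Lex (· < · : Bool → Bool → Prop) (l ++ x) l := by
  induction l with
  | nil => intro h; cases h
  | cons a l ih =>
    intro h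
    cases h with
    | cons h => exact ih h
    | rel h => exact lt_irrefl _ h

lemma lex_decomp {w s : Word} (h : List.Lex (· < ·) w s) :
    w <+: s ∨ ∃ p x y, w = p ++ false :: x ∧ s = p ++ true :: y := by
  induction h with
  | nil => left; exact List.nil_prefix
  | @rel a l1 b l2 h =>
    right
    have ha : a = false := by revert h; cases a <;> cases b <;> decide
    have hb : b = true := by revert h; cases a <;> cases b <;> decide
    exact ⟨[], l1, l2, by simp [ha], by simp [hb]⟩
  | @cons a l1 l2 h ih =>
    rcases ih with ⟨t, rfl⟩ | ⟨p, x, y, h1, h2⟩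
    · left; exact ⟨t, rfl⟩
    · right; exact ⟨a :: p, x, y, by simp [h1], by simp [h2]⟩

lemma suffix_phi {w s : Word} (hs : s <:+ phi w) (hne : s ≠ []) (hnw : s ≠ phi w) :
    ∃ v, v <:+ w ∧ ((s = phi v ∧ v ≠ [] ∧ v ≠ w) ∨ s = false :: true :: phi v ∨ s = true :: phi v) := by
  induction w with
  | nil =>
    exfalso
    have : s = [] := List.suffix_nil.mp (by simpa [phi] using hs)
    exact hne this
  | cons c w ih =>
    rw [phi_cons] at hs hnw
    have hlen : ∀ h : w = c :: w, False := by
      intro h; have := congrArg List.length h; simp at this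
    obtain ⟨p, hp⟩ := hs
    rcases List.append_eq_append_iff.mp hp with ⟨a', ha1, ha2⟩ | ⟨c', hc1, hc2⟩
    · -- s = a' ++ phi w, block = p ++ a'
      by_cases hae : a' = []
      · subst hae
        simp only [List.nil_append] at ha2
        subst ha2
        refine ⟨w, List.suffix_cons c w, Or.inl ⟨rfl, ?_, fun h => (hlen h).elim⟩⟩
        rintro rfl; exact hne (by simp [phi])
      · -- a' nonempty proper suffix of the block
        have hanb : a' ≠ (if c then [false, true] else [false, false, true]) := by
          rintro rfl
          exact hnw (by rw [ha2])
        refine ⟨w, List.suffix_cons c w, ?_⟩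
        cases c <;> simp only [if_true, if_false, Bool.false_eq_true] at ha1 hanb
        · -- block [f,f,t]
          rcases p with _ | ⟨x, _ | ⟨y, _ | ⟨z, p⟩⟩⟩
          · simp only [List.nil_append] at ha1
            exact absurd ha1.symm hanb
          · simp only [List.cons_append, List.nil_append, List.cons.injEq] at ha1
            rcases ha1 with ⟨rfl, rfl⟩
            exact Or.inr (Or.inl (by simpa using ha2))
          · simp only [List.cons_append, List.nil_append, List.cons.injEq] at ha1
            rcases ha1 with ⟨rfl, rfl, rfl⟩
            exact Or.inr (Or.inr (by simpa using ha2))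
          · exfalso
            simp only [List.cons_append, List.cons.injEq] at ha1
            rcases ha1 with ⟨-, -, -, h⟩
            exact hae (List.append_eq_nil_iff.mp h.symm).2
        · -- block [f,t]
          rcases p with _ | ⟨x, _ | ⟨y, p⟩⟩
          · simp only [List.nil_append] at ha1
            exact absurd ha1.symm hanb
          · simp only [List.cons_append, List.nil_append, List.cons.injEq] at ha1
            rcases ha1 with ⟨rfl, rfl⟩
            exact Or.inr (Or.inr (by simpa using ha2))
          · exfalso
            simp only [List.cons_append, List.cons.injEq] at ha1
            rcases ha1 with ⟨-, -, h⟩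
            exact hae (List.append_eq_nil_iff.mp h.symm).2
    · -- s <:+ phi w
      have hsw : s <:+ phi w := ⟨c', hc2.symm⟩
      by_cases hse : s = phi w
      · refine ⟨w, List.suffix_cons c w, Or.inl ⟨hse, ?_, fun h => (hlen h).elim⟩⟩
        rintro rfl; exact hne (by simpa [phi] using hse)
      · obtain ⟨v, hv, hcase⟩ := ih hsw hse
        refine ⟨v, hv.trans (List.suffix_cons c w), ?_⟩
        rcases hcase with ⟨h1, h2, h3⟩ | h | h
        · refine Or.inl ⟨h1, h2, ?_⟩
          intro hvc
          have := hv.length_le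
          rw [hvc] at this
          simp at this
        · exact Or.inr (Or.inl h)
        · exact Or.inr (Or.inr h)

lemma lyndon_lt_suffix_phi {w s : Word} (hw : IsLyndon w) (hs : s <:+ w)
    (hne : s ≠ []) (hnw : s ≠ w) : wlt (phi w) (phi s) := by
  have h : wlt w s := hw s hs hne hnw
  have hlen : s.length < w.length := by
    have h1 := hs.length_le
    rcases lt_or_eq_of_le h1 with h2 | h2
    · exact h2
    · exact absurd (List.Sublist.eq_of_length hs.sublist h2) hnw
  rcases lex_decomp h with hpre | ⟨p, x, y, h1, h2⟩
  · exact absurd hpre.length_le (by omega)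
  · have e1 : phi w = (phi p ++ [false]) ++ (false :: true :: phi x) := by
      rw [h1, phi_append, phi_cons]; simp
    have e2 : phi s = (phi p ++ [false]) ++ (true :: phi y) := by
      rw [h2, phi_append, phi_cons]; simp
    rw [wlt, e1, e2]
    exact lex_append (List.Lex.rel (by decide))

lemma phi_lyndon {x : Word} (hw : IsLyndon (false :: x)) : IsLyndon (phi (false :: x)) := by
  intro s hs hne hnw
  obtain ⟨v, hv, hcase⟩ := suffix_phi hs hne hnw
  have hphi : phi (false :: x) = false :: false :: true :: phi x := by
    rw [phi_cons]; simp
  rcases hcase with ⟨rfl, hvne, hvnw⟩ | rfl | rfl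
  · exact lyndon_lt_suffix_phi hw hv hvne hvnw
  · rw [wlt, hphi]
    exact List.Lex.cons (List.Lex.rel (by decide))
  · rw [wlt, hphi]
    exact List.Lex.rel (by decide)

lemma lyndon_a : IsLyndon [false] := by
  intro s hs hne hnw
  exfalso
  rcases hs with ⟨p, hp⟩
  rcases p with _ | ⟨a, p⟩
  · exact hnw (by simpa using hp)
  · simp only [List.cons_append, List.cons.injEq] at hp
    exact hne (List.append_eq_nil_iff.mp hp.2).2

lemma iter_lyndon (j : ℕ) :
    ∃ x, phi^[j] [false] = false :: x ∧ IsLyndon (phi^[j] [false]) := by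
  induction j with
  | zero => exact ⟨[], rfl, lyndon_a⟩
  | succ j ih =>
    obtain ⟨x, hx, hl⟩ := ih
    rw [Function.iterate_succ_apply', hx]
    rw [hx] at hl
    exact ⟨false :: true :: phi x, by rw [phi_cons]; simp, phi_lyndon hl⟩

lemma iter_phi_append (j : ℕ) (x y : Word) :
    phi^[j] (x ++ y) = phi^[j] x ++ phi^[j] y := by
  induction j generalizing x y with
  | zero => rfl
  | succ j ih =>
    rw [Function.iterate_succ_apply, Function.iterate_succ_apply,
      Function.iterate_succ_apply, phi_append, ih]

lemma iter_prefix {j k : ℕ} (h : j ≤ k) : phi^[j] [false] <+: phi^[k] [false] := by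
  induction k, h using Nat.le_induction with
  | base => exact List.prefix_refl _
  | succ k hk ih =>
    refine ih.trans ?_
    rw [Function.iterate_succ_apply]
    have hphi : phi [false] = [false] ++ [false, true] := by decide
    rw [hphi, iter_phi_append]
    exact List.prefix_append _ _

lemma flatten_eq (i : ℕ) :
    (((List.range (i+1)).reverse.map (fun j => phi^[j] [false])).flatten)
      = phi^[i] [false] ++ ((List.range i).reverse.map (fun j => phi^[j] [false])).flatten := by
  simp [List.range_succ]

lemma phi_flattenW (i : ℕ) :
    phi (((List.range i).reverse.map (fun j => phi^[j] [false])).flatten) ++ [false]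
      = ((List.range (i+1)).reverse.map (fun j => phi^[j] [false])).flatten := by
  induction i with
  | zero => decide
  | succ i ih =>
    rw [flatten_eq (i+1), flatten_eq i, phi_append, List.append_assoc, ih,
      ← Function.iterate_succ_apply' phi, flatten_eq i]

lemma ell_eq (i : ℕ) (hi : 1 ≤ i) :
    ell i = ((List.range i).reverse.map (fun j => phi^[j] [false])).flatten ++ [true] := by
  induction i, hi using Nat.le_induction with
  | base => decide
  | succ i hi ih =>
    have hstep : ell (i + 1) = phi (ell i) := by
      obtain ⟨n, rfl⟩ := Nat.exists_eq_add_of_le hi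
      rw [Nat.add_comm 1 n]
      rfl
    rw [hstep, ih, phi_append, ← phi_flattenW i]
    have : phi [true] = [false, true] := by decide
    rw [this, List.append_assoc]
    rfl

/-- For `i ≥ 1`, the Lyndon factorization of `ℓ i` with its last character
removed is `φ^(i-1)(a), …, φ^0(a)`. -/
theorem stmt11 (i : ℕ) (hi : 1 ≤ i) :
    IsLyndonFactorization ((ell i).dropLast)
      ((List.range i).reverse.map (fun j => phi^[j] [false])) := by
  refine ⟨?_, ?_, ?_⟩
  · rw [ell_eq i hi, List.dropLast_concat]
  · intro x hx
    simp only [List.mem_map, List.mem_reverse, List.mem_range] at hx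
    obtain ⟨j, -, rfl⟩ := hx
    obtain ⟨t, ht, hl⟩ := iter_lyndon j
    exact ⟨hl, by rw [ht]; simp⟩
  · apply List.Pairwise.isChain
    rw [List.pairwise_map, List.pairwise_reverse]
    refine (List.pairwise_lt_range (n := i)).imp ?_
    intro j k hjk
    obtain ⟨t, ht⟩ := iter_prefix (le_of_lt hjk)
    rw [wlt, ← ht]
    exact not_lex_append _ _
end
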